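/- The finite linear span of mapping space monomials is closed under pointwise multiplication: the set of functions F : Lip(□^d, ℝ^n) → ℝ of the form F(x) = λ_0 + Σ_{i=1}^r λ_i Φ_{m_i}^{P_i,π_i}(x), where r ∈ ℕ, λ_0,…,λ_r ∈ ℝ, and each (P_i,π_i) is a level-m_i index, is a subalgebra of the algebra of real-valued functions on Lip(□^d, ℝ^n); in particular, for any two such functions F and G there exist λ'_0,…,λ'_{r'} and level indices (P'_i,π'_i) with F(x)·G(x) = λ'_0 + Σ_{i=1}^{r'} λ'_i Φ_{m'_i}^{P'_i,π'_i}(x) for every x ∈ Lip(□^d, ℝ^n). -/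

import Mathlib

open MeasureTheory

open scoped Classical

noncomputable section

/-- The unit cube `[0,1]^d` as a subset of `Fin d → ℝ`. -/
def unitCube (d : ℕ) : Set (Fin d → ℝ) := Set.Icc 0 1

/-- Lipschitz condition with constant `L`, with respect to Euclidean norms. -/
def EuclidLip {d n : ℕ} (L : ℝ) (x : (Fin d → ℝ) → Fin n → ℝ) : Prop :=
  ∀ s t : Fin d → ℝ,
    Real.sqrt (∑ k, (x s k - x t k) ^ 2) ≤ L * Real.sqrt (∑ j, (s j - t j) ^ 2)

/-- Lipschitz map. -/
def IsLipMap {d n : ℕ} (x : (Fin d → ℝ) → Fin n → ℝ) : Prop :=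
  ∃ L : ℝ, EuclidLip L x

/-- The Jacobian minor `J[x_P](s)`: the determinant of the `d × d` matrix
with `(i,j)` entry `∂ x_{P i} / ∂ s_j (s)`. -/
def jacobianMinor {d n : ℕ} (x : (Fin d → ℝ) → Fin n → ℝ) (P : Fin d → Fin n)
    (s : Fin d → ℝ) : ℝ :=
  (Matrix.of fun i j : Fin d => fderiv ℝ (fun t => x t (P i)) s (Pi.single j 1)).det

/-- The permuted `m`-simplex `Δ^m_π(a,b)`. -/
def permSimplex {m : ℕ} (π : Equiv.Perm (Fin m)) (a b : ℝ) : Set (Fin m → ℝ) :=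
  {u | (∀ i, u i ∈ Set.Icc a b) ∧ StrictMono fun i => u (π i)}

/-- The integration domain `D^{m,d}_π(a,b) = Δ^m_{π 1}(a₁,b₁) × ⋯ × Δ^m_{π d}(a_d,b_d)`. -/
def intDomain {m d : ℕ} (π : Fin d → Equiv.Perm (Fin m)) (a b : Fin d → ℝ) :
    Set (Fin m → Fin d → ℝ) :=
  {t | ∀ j, (fun i => t i j) ∈ permSimplex (π j) (a j) (b j)}

/-- The restricted mapping space monomial `Φ_m^{P,π}(x)_{a,b}`. -/
def msMonomialOn {d n m : ℕ} (x : (Fin d → ℝ) → Fin n → ℝ)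
    (P : Fin m → Fin d → Fin n) (π : Fin d → Equiv.Perm (Fin m))
    (a b : Fin d → ℝ) : ℝ :=
  ∫ t in intDomain π a b, ∏ i, jacobianMinor x (P i) (t i)

/-- The mapping space monomial `Φ_m^{P,π}(x)`. -/
def msMonomial {d n m : ℕ} (x : (Fin d → ℝ) → Fin n → ℝ)
    (P : Fin m → Fin d → Fin n) (π : Fin d → Equiv.Perm (Fin m)) : ℝ :=
  msMonomialOn x P π (fun _ => 0) (fun _ => 1)


/-! ### Auxiliary lemmas -/

section Aux

open Set

variable {d n : ℕ}

lemma measurable_jacobianMinor (x : (Fin d → ℝ) → Fin n → ℝ) (P : Fin d → Fin n) :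
    Measurable (jacobianMinor x P) := by
  have h : ∀ i j : Fin d, Measurable fun s => fderiv ℝ (fun t => x t (P i)) s (Pi.single j 1) :=
    fun i j => measurable_fderiv_apply_const ℝ _ _
  unfold jacobianMinor
  simp only [Matrix.det_apply']
  apply Finset.measurable_sum
  intro σ _
  apply Measurable.const_mul
  apply Finset.measurable_prod
  intro i _
  simpa using h (σ i) i

lemma lip_component {L : ℝ} {x : (Fin d → ℝ) → Fin n → ℝ} (hx : EuclidLip L x) (k : Fin n) :
    LipschitzWith (Real.toNNReal (|L| * Real.sqrt d)) fun s => x s k := by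
  rw [lipschitzWith_iff_dist_le_mul]
  intro s t
  rw [Real.dist_eq]
  have h1 : |x s k - x t k| ≤ Real.sqrt (∑ k', (x s k' - x t k') ^ 2) := by
    rw [← Real.sqrt_sq_eq_abs]
    exact Real.sqrt_le_sqrt (Finset.single_le_sum
      (f := fun k' => (x s k' - x t k') ^ 2) (fun _ _ => sq_nonneg _) (Finset.mem_univ k))
  have h2 := hx s t
  have h3 : L * Real.sqrt (∑ j, (s j - t j) ^ 2) ≤ |L| * Real.sqrt (∑ j, (s j - t j) ^ 2) :=
    mul_le_mul_of_nonneg_right (le_abs_self L) (Real.sqrt_nonneg _)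
  have h4 : Real.sqrt (∑ j, (s j - t j) ^ 2) ≤ Real.sqrt d * dist s t := by
    have hb : ∀ j, (s j - t j) ^ 2 ≤ (dist s t) ^ 2 := by
      intro j
      have hj : |s j - t j| ≤ dist s t := by
        rw [← Real.dist_eq]; exact dist_le_pi_dist s t j
      calc (s j - t j) ^ 2 = |s j - t j| ^ 2 := (sq_abs _).symm
        _ ≤ (dist s t) ^ 2 := pow_le_pow_left₀ (abs_nonneg _) hj 2
    calc Real.sqrt (∑ j, (s j - t j) ^ 2)
        ≤ Real.sqrt (∑ _j : Fin d, (dist s t) ^ 2) :=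
          Real.sqrt_le_sqrt (Finset.sum_le_sum fun j _ => hb j)
      _ = Real.sqrt (d * (dist s t) ^ 2) := by
          rw [Finset.sum_const, Finset.card_univ, Fintype.card_fin, nsmul_eq_mul]
      _ = Real.sqrt d * dist s t := by
          rw [Real.sqrt_mul (by positivity), Real.sqrt_sq dist_nonneg]
  calc |x s k - x t k| ≤ |L| * Real.sqrt (∑ j, (s j - t j) ^ 2) := h1.trans (h2.trans h3)
    _ ≤ |L| * (Real.sqrt d * dist s t) := mul_le_mul_of_nonneg_left h4 (abs_nonneg _)
    _ = (Real.toNNReal (|L| * Real.sqrt d) : ℝ) * dist s t := by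
        rw [Real.coe_toNNReal _ (by positivity), mul_assoc]

lemma jacobianMinor_bound {x : (Fin d → ℝ) → Fin n → ℝ} (hx : IsLipMap x) :
    ∃ C : ℝ, 0 ≤ C ∧ ∀ (P : Fin d → Fin n) (s : Fin d → ℝ), |jacobianMinor x P s| ≤ C := by
  obtain ⟨L, hL⟩ := hx
  set K : ℝ := |L| * Real.sqrt d with hK
  have hK0 : (0:ℝ) ≤ K := by positivity
  have hent : ∀ (k : Fin n) (j : Fin d) (s : Fin d → ℝ),
      |fderiv ℝ (fun t => x t k) s (Pi.single j 1)| ≤ K := by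
    intro k j s
    have h1 : ‖fderiv ℝ (fun t => x t k) s‖ ≤ K := by
      have := norm_fderiv_le_of_lipschitz (𝕜 := ℝ) (x₀ := s) (lip_component hL k)
      rwa [Real.coe_toNNReal _ (by positivity)] at this
    have h2 : ‖(Pi.single j 1 : Fin d → ℝ)‖ = 1 := by
      rw [Pi.norm_single]; exact norm_one
    calc |fderiv ℝ (fun t => x t k) s (Pi.single j 1)|
        ≤ ‖fderiv ℝ (fun t => x t k) s‖ * ‖(Pi.single j 1 : Fin d → ℝ)‖ :=
          (fderiv ℝ (fun t => x t k) s).le_opNorm _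
      _ = ‖fderiv ℝ (fun t => x t k) s‖ := by rw [h2, mul_one]
      _ ≤ K := h1
  refine ⟨(Fintype.card (Equiv.Perm (Fin d)) : ℝ) * K ^ d, by positivity, ?_⟩
  intro P s
  unfold jacobianMinor
  rw [Matrix.det_apply']
  calc |∑ σ : Equiv.Perm (Fin d), ((Equiv.Perm.sign σ : ℤ) : ℝ) *
          ∏ i, (Matrix.of fun i j : Fin d =>
            fderiv ℝ (fun t => x t (P i)) s (Pi.single j 1)) (σ i) i|
      ≤ ∑ σ : Equiv.Perm (Fin d), |((Equiv.Perm.sign σ : ℤ) : ℝ) *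
          ∏ i, (Matrix.of fun i j : Fin d =>
            fderiv ℝ (fun t => x t (P i)) s (Pi.single j 1)) (σ i) i| :=
        Finset.abs_sum_le_sum_abs _ _
    _ ≤ ∑ _σ : Equiv.Perm (Fin d), K ^ d := by
        refine Finset.sum_le_sum fun σ _ => ?_
        have hsgn : |((Equiv.Perm.sign σ : ℤ) : ℝ)| = 1 := by
          rcases Int.units_eq_one_or (Equiv.Perm.sign σ) with h | h <;> simp [h]
        rw [abs_mul, hsgn, one_mul, Finset.abs_prod]
        calc (∏ i, |(Matrix.of fun i j : Fin d =>
                fderiv ℝ (fun t => x t (P i)) s (Pi.single j 1)) (σ i) i|)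
            ≤ ∏ _i : Fin d, K :=
              Finset.prod_le_prod (fun _ _ => abs_nonneg _) (fun i _ => hent _ _ _)
          _ = K ^ d := by rw [Finset.prod_const, Finset.card_univ, Fintype.card_fin]
    _ = (Fintype.card (Equiv.Perm (Fin d)) : ℝ) * K ^ d := by
        rw [Finset.sum_const, Finset.card_univ, nsmul_eq_mul]

lemma measurableSet_permSimplex {m : ℕ} (π : Equiv.Perm (Fin m)) (a b : ℝ) :
    MeasurableSet (permSimplex π a b) := by
  have h1 : MeasurableSet {u : Fin m → ℝ | ∀ i, u i ∈ Set.Icc a b} := by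
    have : {u : Fin m → ℝ | ∀ i, u i ∈ Set.Icc a b}
        = Set.pi Set.univ (fun _ : Fin m => Set.Icc a b) := by
      ext u; simp [Set.mem_pi, Set.mem_Icc, Pi.le_def, forall_and]
    rw [this]
    exact MeasurableSet.univ_pi fun _ => measurableSet_Icc
  have h2 : MeasurableSet {u : Fin m → ℝ | StrictMono fun i => u (π i)} := by
    have he : {u : Fin m → ℝ | StrictMono fun i => u (π i)}
        = ⋂ (p : Fin m), ⋂ (q : Fin m), ⋂ (_ : p < q), {u | u (π p) < u (π q)} := by
      ext u
      constructor
      · intro h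
        simp only [Set.mem_iInter, Set.mem_setOf_eq]
        intro p q hpq; exact h hpq
      · intro h p q hpq
        simp only [Set.mem_iInter, Set.mem_setOf_eq] at h
        exact h p q hpq
    rw [he]
    refine MeasurableSet.iInter fun p => MeasurableSet.iInter fun q =>
      MeasurableSet.iInter fun _ => ?_
    exact measurableSet_lt (measurable_pi_apply _) (measurable_pi_apply _)
  have : permSimplex π a b
      = {u : Fin m → ℝ | ∀ i, u i ∈ Set.Icc a b} ∩ {u | StrictMono fun i => u (π i)} := by
    ext u; simp [permSimplex, Set.mem_setOf_eq, Set.mem_inter_iff]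
  rw [this]
  exact h1.inter h2

lemma measurableSet_intDomain {m : ℕ} (π : Fin d → Equiv.Perm (Fin m)) (a b : Fin d → ℝ) :
    MeasurableSet (intDomain π a b) := by
  have he : intDomain π a b
      = ⋂ j, (fun (t : Fin m → Fin d → ℝ) (i : Fin m) => t i j) ⁻¹'
          (permSimplex (π j) (a j) (b j)) := by
    ext t; simp [intDomain, Set.mem_iInter]
  rw [he]
  refine MeasurableSet.iInter fun j => ?_
  refine (measurableSet_permSimplex _ _ _).preimage ?_
  exact measurable_pi_lambda _ fun i => (measurable_pi_apply j).comp (measurable_pi_apply i)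

lemma intDomain_subset_cube {m : ℕ} (π : Fin d → Equiv.Perm (Fin m)) :
    intDomain π (fun _ => (0:ℝ)) (fun _ => 1)
      ⊆ Set.Icc (0 : Fin m → Fin d → ℝ) 1 := by
  intro t ht
  simp only [Set.mem_Icc, Pi.le_def]
  constructor <;> intro i <;> intro j
  · exact ((ht j).1 i).1
  · exact ((ht j).1 i).2

lemma integrableOn_prodJac {x : (Fin d → ℝ) → Fin n → ℝ} (hx : IsLipMap x) {m : ℕ}
    (P : Fin m → Fin d → Fin n) {s : Set (Fin m → Fin d → ℝ)} (hs : MeasurableSet s)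
    (hsub : s ⊆ Set.Icc (0 : Fin m → Fin d → ℝ) 1) :
    IntegrableOn (fun t => ∏ i, jacobianMinor x (P i) (t i)) s := by
  obtain ⟨C, hC0, hC⟩ := jacobianMinor_bound hx
  have hmeas : Measurable fun t : Fin m → Fin d → ℝ => ∏ i, jacobianMinor x (P i) (t i) :=
    Finset.measurable_prod _ fun i _ =>
      (measurable_jacobianMinor x (P i)).comp (measurable_pi_apply i)
  have hfin : volume s < ⊤ :=
    lt_of_le_of_lt (measure_mono hsub) isCompact_Icc.measure_lt_top
  refine Integrable.mono' (g := fun _ => C ^ m) ?_ hmeas.aestronglyMeasurable ?_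
  · exact integrableOn_const hfin.ne
  · refine Filter.Eventually.of_forall fun t => ?_
    rw [Real.norm_eq_abs]
    calc |∏ i, jacobianMinor x (P i) (t i)| = ∏ i, |jacobianMinor x (P i) (t i)| :=
          Finset.abs_prod _ _
      _ ≤ ∏ _i : Fin m, C :=
          Finset.prod_le_prod (fun _ _ => abs_nonneg _) (fun i _ => hC _ _)
      _ = C ^ m := by rw [Finset.prod_const, Finset.card_univ, Fintype.card_fin]

lemma inj_of_mem_intDomain {m : ℕ} {σ : Fin d → Equiv.Perm (Fin m)} {a b : Fin d → ℝ}
    {t : Fin m → Fin d → ℝ} (ht : t ∈ intDomain σ a b) (j : Fin d) :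
    Function.Injective fun i => t i j := by
  have h := (ht j).2
  have he : (fun i => t i j) = (fun i => t (σ j i) j) ∘ (σ j).symm := by
    funext i; simp
  rw [he]
  exact h.injective.comp (σ j).symm.injective

lemma intDomain_disjoint {m : ℕ} {a b : Fin d → ℝ} {σ σ' : Fin d → Equiv.Perm (Fin m)}
    (h : σ ≠ σ') : Disjoint (intDomain σ a b) (intDomain σ' a b) := by
  rw [Set.disjoint_left]
  intro t ht ht'
  apply h
  funext j
  apply Equiv.ext
  intro i
  have h1 : Monotone ((fun i => t i j) ∘ (σ j)) := ((ht j).2).monotone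
  have h2 : Monotone ((fun i => t i j) ∘ (σ' j)) := ((ht' j).2).monotone
  have hu := Tuple.unique_monotone h1 h2
  have := congrFun hu i
  exact inj_of_mem_intDomain ht j this

lemma lt_iff_of_mem_intDomain {m : ℕ} {σ : Fin d → Equiv.Perm (Fin m)} {a b : Fin d → ℝ}
    {t t' : Fin m → Fin d → ℝ} (ht : t ∈ intDomain σ a b) (ht' : t' ∈ intDomain σ a b)
    (i₁ i₂ : Fin m) (j : Fin d) : t i₁ j < t i₂ j ↔ t' i₁ j < t' i₂ j := by
  have key : ∀ {u : Fin m → Fin d → ℝ}, u ∈ intDomain σ a b →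
      (u i₁ j < u i₂ j ↔ (σ j).symm i₁ < (σ j).symm i₂) := by
    intro u hu
    have h := (hu j).2
    conv_lhs => rw [← (σ j).apply_symm_apply i₁, ← (σ j).apply_symm_apply i₂]
    exact h.lt_iff_lt
  rw [key ht, key ht']

/-- The pairing measurable equivalence between a product of two cube-function spaces
and the joint space. -/
def pairEquiv (m m' : ℕ) (β : Type) [MeasurableSpace β] :
    ((Fin m → β) × (Fin m' → β)) ≃ᵐ (Fin (m + m') → β) :=
  (MeasurableEquiv.sumPiEquivProdPi (fun _ : Fin m ⊕ Fin m' => β)).symm.trans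
    (MeasurableEquiv.piCongrLeft (fun _ => β) finSumFinEquiv)

lemma pairEquiv_measurePreserving (m m' : ℕ) (β : Type) [MeasureSpace β]
    [SigmaFinite (volume : Measure β)] :
    MeasurePreserving (pairEquiv m m' β) volume volume := by
  have h1 := volume_measurePreserving_sumPiEquivProdPi_symm (fun _ : Fin m ⊕ Fin m' => β)
  have h2 := volume_measurePreserving_piCongrLeft (fun _ : Fin (m + m') => β) finSumFinEquiv
  exact h2.comp h1

lemma pairEquiv_apply_castAdd {m m' : ℕ} {β : Type} [MeasurableSpace β]
    (u : Fin m → β) (v : Fin m' → β) (i : Fin m) :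
    pairEquiv m m' β (u, v) (Fin.castAdd m' i) = u i := by
  have := Equiv.piCongrLeft_sumInl (fun _ : Fin (m + m') => β) finSumFinEquiv u v i
  simpa [pairEquiv, MeasurableEquiv.piCongrLeft, MeasurableEquiv.sumPiEquivProdPi] using this

lemma pairEquiv_apply_natAdd {m m' : ℕ} {β : Type} [MeasurableSpace β]
    (u : Fin m → β) (v : Fin m' → β) (i : Fin m') :
    pairEquiv m m' β (u, v) (Fin.natAdd m i) = v i := by
  have := Equiv.piCongrLeft_sumInr (fun _ : Fin (m + m') => β) finSumFinEquiv u v i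
  simpa [pairEquiv, MeasurableEquiv.piCongrLeft, MeasurableEquiv.sumPiEquivProdPi] using this

/-- The shuffle set: the joint domain corresponding to the product of two integration
domains. -/
def shuffleSet {d : ℕ} (m m' : ℕ) (π : Fin d → Equiv.Perm (Fin m))
    (ρ : Fin d → Equiv.Perm (Fin m')) : Set (Fin (m + m') → Fin d → ℝ) :=
  {t | (fun i => t (Fin.castAdd m' i)) ∈ intDomain π (fun _ => 0) (fun _ => 1) ∧
       (fun i => t (Fin.natAdd m i)) ∈ intDomain ρ (fun _ => 0) (fun _ => 1)}

lemma pairEquiv_preimage_shuffleSet {m m' : ℕ} (π : Fin d → Equiv.Perm (Fin m))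
    (ρ : Fin d → Equiv.Perm (Fin m')) :
    (pairEquiv m m' (Fin d → ℝ)) ⁻¹' (shuffleSet m m' π ρ)
      = (intDomain π (fun _ => 0) (fun _ => 1)) ×ˢ (intDomain ρ (fun _ => 0) (fun _ => 1)) := by
  ext ⟨u, v⟩
  have hc : (fun i => pairEquiv m m' (Fin d → ℝ) (u, v) (Fin.castAdd m' i)) = u := by
    funext i; exact pairEquiv_apply_castAdd u v i
  have hn : (fun i => pairEquiv m m' (Fin d → ℝ) (u, v) (Fin.natAdd m i)) = v := by
    funext i; exact pairEquiv_apply_natAdd u v i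
  simp only [Set.mem_preimage, shuffleSet, Set.mem_setOf_eq, Set.mem_prod, hc, hn]

lemma measurableSet_shuffleSet {m m' : ℕ} (π : Fin d → Equiv.Perm (Fin m))
    (ρ : Fin d → Equiv.Perm (Fin m')) : MeasurableSet (shuffleSet m m' π ρ) := by
  have h1 : MeasurableSet {t : Fin (m + m') → Fin d → ℝ |
      (fun i => t (Fin.castAdd m' i)) ∈ intDomain π (fun _ => 0) (fun _ => 1)} := by
    refine (measurableSet_intDomain π _ _).preimage ?_
    exact measurable_pi_lambda _ fun i => measurable_pi_apply _
  have h2 : MeasurableSet {t : Fin (m + m') → Fin d → ℝ |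
      (fun i => t (Fin.natAdd m i)) ∈ intDomain ρ (fun _ => 0) (fun _ => 1)} := by
    refine (measurableSet_intDomain ρ _ _).preimage ?_
    exact measurable_pi_lambda _ fun i => measurable_pi_apply _
  exact h1.inter h2

lemma shuffleSet_subset_cube {m m' : ℕ} (π : Fin d → Equiv.Perm (Fin m))
    (ρ : Fin d → Equiv.Perm (Fin m')) :
    shuffleSet m m' π ρ ⊆ Set.Icc (0 : Fin (m + m') → Fin d → ℝ) 1 := by
  intro t ht
  simp only [Set.mem_Icc, Pi.le_def]
  constructor <;> intro i <;> refine Fin.addCases (fun i' => ?_) (fun i' => ?_) i <;> intro j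
  · exact ((ht.1 j).1 i').1
  · exact ((ht.2 j).1 i').1
  · exact ((ht.1 j).1 i').2
  · exact ((ht.2 j).1 i').2

/-- Dichotomy: a cell `intDomain σ` is either contained in the shuffle set or disjoint
from it. -/
lemma shuffleSet_mem_of_mem {m m' : ℕ} {π : Fin d → Equiv.Perm (Fin m)}
    {ρ : Fin d → Equiv.Perm (Fin m')} {σ : Fin d → Equiv.Perm (Fin (m + m'))}
    {t t' : Fin (m + m') → Fin d → ℝ}
    (ht : t ∈ intDomain σ (fun _ => 0) (fun _ => 1))
    (ht' : t' ∈ intDomain σ (fun _ => 0) (fun _ => 1))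
    (hmem : t ∈ shuffleSet m m' π ρ) : t' ∈ shuffleSet m m' π ρ := by
  constructor
  · intro j
    refine ⟨fun i => (ht' j).1 _, ?_⟩
    intro i₁ i₂ h12
    have := hmem.1 j |>.2 h12
    exact (lt_iff_of_mem_intDomain ht ht' _ _ j).mp this
  · intro j
    refine ⟨fun i => (ht' j).1 _, ?_⟩
    intro i₁ i₂ h12
    have := hmem.2 j |>.2 h12
    exact (lt_iff_of_mem_intDomain ht ht' _ _ j).mp this

/-- Any point of the cube all of whose columns are injective lies in some cell. -/
lemma exists_cell {M : ℕ} {t : Fin M → Fin d → ℝ}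
    (hbox : t ∈ Set.Icc (0 : Fin M → Fin d → ℝ) 1)
    (hinj : ∀ j, Function.Injective fun i => t i j) :
    ∃ σ : Fin d → Equiv.Perm (Fin M), t ∈ intDomain σ (fun _ => 0) (fun _ => 1) := by
  refine ⟨fun j => Tuple.sort (fun i => t i j), fun j => ?_⟩
  constructor
  · intro i
    exact ⟨hbox.1 i j, hbox.2 i j⟩
  · exact (Tuple.monotone_sort (fun i => t i j)).strictMono_of_injective
      ((hinj j).comp (Tuple.sort (fun i => t i j)).injective)

/-- The set of points with a repeated column entry is null. -/
lemma bad_null (M : ℕ) :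
    volume {t : Fin M → Fin d → ℝ | ∃ j, ∃ i i', i ≠ i' ∧ t i j = t i' j} = 0 := by
  have he : {t : Fin M → Fin d → ℝ | ∃ j, ∃ i i', i ≠ i' ∧ t i j = t i' j}
      = ⋃ (j : Fin d), ⋃ (i : Fin M), ⋃ (i' : Fin M), ⋃ (_ : i ≠ i'),
          {t : Fin M → Fin d → ℝ | t i j = t i' j} := by
    ext t; simp only [Set.mem_setOf_eq, Set.mem_iUnion]
    constructor
    · rintro ⟨j, i, i', hne, heq⟩; exact ⟨j, i, i', hne, heq⟩
    · rintro ⟨j, i, i', hne, heq⟩; exact ⟨j, i, i', hne, heq⟩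
  rw [he]
  refine measure_iUnion_null fun j => measure_iUnion_null fun i => measure_iUnion_null
    fun i' => measure_iUnion_null fun hne => ?_
  set φ : (Fin M → Fin d → ℝ) →ₗ[ℝ] ℝ :=
    ((LinearMap.proj j : (Fin d → ℝ) →ₗ[ℝ] ℝ).comp
        (LinearMap.proj i : (Fin M → Fin d → ℝ) →ₗ[ℝ] (Fin d → ℝ))) -
      ((LinearMap.proj j : (Fin d → ℝ) →ₗ[ℝ] ℝ).comp
        (LinearMap.proj i' : (Fin M → Fin d → ℝ) →ₗ[ℝ] (Fin d → ℝ))) with hφ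
  have hker : {t : Fin M → Fin d → ℝ | t i j = t i' j} = ↑(LinearMap.ker φ) := by
    ext t
    simp only [Set.mem_setOf_eq, SetLike.mem_coe, LinearMap.mem_ker, hφ, LinearMap.sub_apply,
      LinearMap.coe_comp, Function.comp_apply, LinearMap.proj_apply, sub_eq_zero]
  rw [hker]
  refine Measure.addHaar_submodule _ _ ?_
  intro htop
  have h1 : φ (Pi.single i (Pi.single j 1)) = 1 := by
    simp [hφ, Pi.single_eq_same, Pi.single_eq_of_ne (Ne.symm hne)]
  have h2 : φ (Pi.single i (Pi.single j 1)) = 0 := by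
    have : Pi.single i (Pi.single j 1) ∈ LinearMap.ker φ := htop ▸ Submodule.mem_top
    exact this
  rw [h1] at h2
  exact one_ne_zero h2

/-- The key shuffle-product identity: a product of two monomials is a sum of monomials. -/
lemma prod_msMonomial (x : (Fin d → ℝ) → Fin n → ℝ) (hx : IsLipMap x) {m m' : ℕ}
    (P : Fin m → Fin d → Fin n) (π : Fin d → Equiv.Perm (Fin m))
    (Q : Fin m' → Fin d → Fin n) (ρ : Fin d → Equiv.Perm (Fin m')) :
    msMonomial x P π * msMonomial x Q ρ =
      ∑ σ : Fin d → Equiv.Perm (Fin (m + m')),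
        (if intDomain σ (fun _ => (0:ℝ)) (fun _ => 1) ⊆ shuffleSet m m' π ρ then (1:ℝ) else 0)
          * msMonomial x (Fin.append P Q) σ := by
  classical
  set R := Fin.append P Q with hR
  set F : (Fin (m + m') → Fin d → ℝ) → ℝ := fun t => ∏ i, jacobianMinor x (R i) (t i) with hF
  set S := shuffleSet m m' π ρ with hS
  -- Step 1
  have step1 : msMonomial x P π * msMonomial x Q ρ = ∫ t in S, F t := by
    have hmp := pairEquiv_measurePreserving m m' (Fin d → ℝ)
    have hemb := (pairEquiv m m' (Fin d → ℝ)).measurableEmbedding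
    have h0 := hmp.setIntegral_preimage_emb hemb F S
    rw [hS, pairEquiv_preimage_shuffleSet π ρ] at h0
    rw [← h0]
    symm
    have hsplit : ∀ z : (Fin m → Fin d → ℝ) × (Fin m' → Fin d → ℝ),
        F (pairEquiv m m' (Fin d → ℝ) z)
          = (∏ i, jacobianMinor x (P i) (z.1 i)) * (∏ i, jacobianMinor x (Q i) (z.2 i)) := by
      rintro ⟨u, v⟩
      rw [hF]
      simp only []
      rw [Fin.prod_univ_add]
      congr 1
      · refine Finset.prod_congr rfl fun i _ => ?_
        rw [pairEquiv_apply_castAdd, hR, Fin.append_left]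
      · refine Finset.prod_congr rfl fun i _ => ?_
        rw [pairEquiv_apply_natAdd, hR, Fin.append_right]
    calc (∫ z in (intDomain π (fun _ => (0:ℝ)) fun _ => 1) ×ˢ
              (intDomain ρ (fun _ => (0:ℝ)) fun _ => 1),
            F (pairEquiv m m' (Fin d → ℝ) z))
        = ∫ z in (intDomain π (fun _ => (0:ℝ)) fun _ => 1) ×ˢ
              (intDomain ρ (fun _ => (0:ℝ)) fun _ => 1),
            (∏ i, jacobianMinor x (P i) (z.1 i)) * (∏ i, jacobianMinor x (Q i) (z.2 i)) := by
          exact integral_congr_ae (Filter.Eventually.of_forall fun z => hsplit z)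
      _ = msMonomial x P π * msMonomial x Q ρ := by
          rw [Measure.volume_eq_prod, ← Measure.prod_restrict]
          exact integral_prod_mul (f := fun u : Fin m → Fin d → ℝ =>
              ∏ i, jacobianMinor x (P i) (u i))
            (g := fun v : Fin m' → Fin d → ℝ => ∏ i, jacobianMinor x (Q i) (v i))
  -- Step 2
  have hDmeas : ∀ σ : Fin d → Equiv.Perm (Fin (m + m')),
      MeasurableSet (intDomain σ (fun _ => (0:ℝ)) (fun _ => 1)) :=
    fun σ => measurableSet_intDomain σ _ _
  set T : Finset (Fin d → Equiv.Perm (Fin (m + m'))) :=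
    Finset.univ.filter (fun σ => intDomain σ (fun _ => (0:ℝ)) (fun _ => 1) ⊆ S) with hT
  set U := ⋃ σ ∈ T, intDomain σ (fun _ => (0:ℝ)) (fun _ => 1) with hU
  have hUS : U ⊆ S := by
    rw [hU]
    intro t ht
    simp only [Set.mem_iUnion] at ht
    obtain ⟨σ, hσT, htσ⟩ := ht
    exact (Finset.mem_filter.mp hσT).2 htσ
  have hSU : S \ U ⊆ {t : Fin (m + m') → Fin d → ℝ | ∃ j, ∃ i i', i ≠ i' ∧ t i j = t i' j} := by
    rintro t ⟨htS, htU⟩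
    by_contra hbad
    simp only [Set.mem_setOf_eq, not_exists] at hbad
    have hinj : ∀ j, Function.Injective fun i => t i j := by
      intro j i i' hii
      by_contra hne
      exact hbad j i i' ⟨hne, hii⟩
    obtain ⟨σ, hσ⟩ := exists_cell (shuffleSet_subset_cube π ρ htS) hinj
    have hcond : intDomain σ (fun _ => (0:ℝ)) (fun _ => 1) ⊆ S :=
      fun t' ht' => shuffleSet_mem_of_mem hσ ht' htS
    apply htU
    rw [hU]
    simp only [Set.mem_iUnion]
    exact ⟨σ, Finset.mem_filter.mpr ⟨Finset.mem_univ σ, hcond⟩, hσ⟩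
  have hae : S =ᵐ[volume] U := by
    rw [MeasureTheory.ae_eq_set]
    constructor
    · exact measure_mono_null hSU (bad_null _)
    · rw [Set.diff_eq_empty.mpr hUS]
      exact measure_empty
  have step2 : ∫ t in S, F t
      = ∑ σ ∈ T, ∫ t in intDomain σ (fun _ => (0:ℝ)) (fun _ => 1), F t := by
    rw [setIntegral_congr_set hae, hU]
    refine integral_biUnion_finset T (fun σ _ => hDmeas σ) ?_ ?_
    · intro σ _ σ' _ hne
      exact intDomain_disjoint hne
    · intro σ _
      exact integrableOn_prodJac hx R (hDmeas σ) (intDomain_subset_cube σ)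
  rw [step1, step2]
  rw [hT, Finset.sum_filter]
  refine Finset.sum_congr rfl fun σ _ => ?_
  by_cases h : intDomain σ (fun _ => (0:ℝ)) (fun _ => 1) ⊆ S <;> (rw [hS] at h; simp [h, hS])
  · rfl

end Aux

/-- the linear span of the mapping space monomials (together with
constants) is closed under pointwise products: the product of two finite linear
combinations of monomials is again such a combination, as functions on the
Lipschitz maps. -/
theorem stmt18 (d n : ℕ) (hd : 1 ≤ d) (hn : d ≤ n)
    (r₁ r₂ : ℕ) (a₀ b₀ : ℝ) (a : Fin r₁ → ℝ) (b : Fin r₂ → ℝ)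
    (m₁ : Fin r₁ → ℕ) (m₂ : Fin r₂ → ℕ)
    (hm₁ : ∀ i, 1 ≤ m₁ i) (hm₂ : ∀ i, 1 ≤ m₂ i)
    (P₁ : ∀ i, Fin (m₁ i) → Fin d → Fin n) (hP₁ : ∀ i k, StrictMono (P₁ i k))
    (π₁ : ∀ i, Fin d → Equiv.Perm (Fin (m₁ i)))
    (P₂ : ∀ i, Fin (m₂ i) → Fin d → Fin n) (hP₂ : ∀ i k, StrictMono (P₂ i k))
    (π₂ : ∀ i, Fin d → Equiv.Perm (Fin (m₂ i))) :
    ∃ (r' : ℕ) (c₀ : ℝ) (c : Fin r' → ℝ) (m' : Fin r' → ℕ)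
      (P' : ∀ i, Fin (m' i) → Fin d → Fin n)
      (π' : ∀ i, Fin d → Equiv.Perm (Fin (m' i))),
      (∀ i, 1 ≤ m' i) ∧ (∀ i k, StrictMono (P' i k)) ∧
      ∀ x : (Fin d → ℝ) → Fin n → ℝ, IsLipMap x →
        (a₀ + ∑ i, a i * msMonomial x (P₁ i) (π₁ i)) *
          (b₀ + ∑ i, b i * msMonomial x (P₂ i) (π₂ i)) =
        c₀ + ∑ i, c i * msMonomial x (P' i) (π' i) := by
  classical
  -- index type
  let ι : Type := Fin r₁ ⊕ Fin r₂ ⊕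
    (Σ p : Fin r₁ × Fin r₂, (Fin d → Equiv.Perm (Fin (m₁ p.1 + m₂ p.2))))
  let Mbig : ι → ℕ := fun i =>
    match i with
    | Sum.inl i => m₁ i
    | Sum.inr (Sum.inl j) => m₂ j
    | Sum.inr (Sum.inr ⟨p, _⟩) => m₁ p.1 + m₂ p.2
  let Pbig : ∀ i : ι, Fin (Mbig i) → Fin d → Fin n := fun i =>
    match i with
    | Sum.inl i => P₁ i
    | Sum.inr (Sum.inl j) => P₂ j
    | Sum.inr (Sum.inr ⟨p, _⟩) => Fin.append (P₁ p.1) (P₂ p.2)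
  let πbig : ∀ i : ι, Fin d → Equiv.Perm (Fin (Mbig i)) := fun i =>
    match i with
    | Sum.inl i => π₁ i
    | Sum.inr (Sum.inl j) => π₂ j
    | Sum.inr (Sum.inr ⟨_, σ⟩) => σ
  let cbig : ι → ℝ := fun i =>
    match i with
    | Sum.inl i => b₀ * a i
    | Sum.inr (Sum.inl j) => a₀ * b j
    | Sum.inr (Sum.inr ⟨p, σ⟩) => a p.1 * b p.2 *
        (if intDomain σ (fun _ => (0:ℝ)) (fun _ => 1)
            ⊆ shuffleSet (m₁ p.1) (m₂ p.2) (π₁ p.1) (π₂ p.2) then (1:ℝ) else 0)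
  let e : Fin (Fintype.card ι) ≃ ι := (Fintype.equivFin ι).symm
  have hM : ∀ i : ι, 1 ≤ Mbig i := by
    rintro (i | j | ⟨p, σ⟩)
    · exact hm₁ i
    · exact hm₂ j
    · exact le_trans (hm₁ p.1) (Nat.le_add_right _ _)
  have hPP : ∀ (i : ι) (k : Fin (Mbig i)), StrictMono (Pbig i k) := by
    rintro (i | j | ⟨p, σ⟩)
    · exact hP₁ i
    · exact hP₂ j
    · intro q
      refine Fin.addCases (fun q0 => ?_) (fun q0 => ?_) q
      · show StrictMono (Fin.append (P₁ p.1) (P₂ p.2) (Fin.castAdd _ q0))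
        rw [Fin.append_left]; exact hP₁ p.1 q0
      · show StrictMono (Fin.append (P₁ p.1) (P₂ p.2) (Fin.natAdd _ q0))
        rw [Fin.append_right]; exact hP₂ p.2 q0
  refine ⟨Fintype.card ι, a₀ * b₀, fun k => cbig (e k), fun k => Mbig (e k),
    fun k => Pbig (e k), fun k => πbig (e k), fun k => hM (e k), fun k => hPP (e k), ?_⟩
  intro x hx
  have hsum : ∑ k : Fin (Fintype.card ι),
      cbig (e k) * msMonomial x (Pbig (e k)) (πbig (e k))
      = ∑ i : ι, cbig i * msMonomial x (Pbig i) (πbig i) :=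
    Equiv.sum_comp e (fun i => cbig i * msMonomial x (Pbig i) (πbig i))
  rw [hsum]
  have hι : ∑ i : ι, cbig i * msMonomial x (Pbig i) (πbig i)
      = (∑ i, (b₀ * a i) * msMonomial x (P₁ i) (π₁ i))
        + ((∑ j, (a₀ * b j) * msMonomial x (P₂ j) (π₂ j))
        + ∑ p : Fin r₁ × Fin r₂, ∑ σ : Fin d → Equiv.Perm (Fin (m₁ p.1 + m₂ p.2)),
            (a p.1 * b p.2 *
              (if intDomain σ (fun _ => (0:ℝ)) (fun _ => 1)
                ⊆ shuffleSet (m₁ p.1) (m₂ p.2) (π₁ p.1) (π₂ p.2) then (1:ℝ) else 0))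
            * msMonomial x (Fin.append (P₁ p.1) (P₂ p.2)) σ) := by
    rw [Fintype.sum_sum_type, Fintype.sum_sum_type, ← Finset.univ_sigma_univ, Finset.sum_sigma]
  rw [hι]
  -- now compute each piece
  have hshuf : ∀ p : Fin r₁ × Fin r₂,
      ∑ σ : Fin d → Equiv.Perm (Fin (m₁ p.1 + m₂ p.2)),
        (a p.1 * b p.2 *
          (if intDomain σ (fun _ => (0:ℝ)) (fun _ => 1)
            ⊆ shuffleSet (m₁ p.1) (m₂ p.2) (π₁ p.1) (π₂ p.2) then (1:ℝ) else 0))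
        * msMonomial x (Fin.append (P₁ p.1) (P₂ p.2)) σ
      = (a p.1 * msMonomial x (P₁ p.1) (π₁ p.1)) * (b p.2 * msMonomial x (P₂ p.2) (π₂ p.2)) := by
    intro p
    have hkey := prod_msMonomial x hx (P₁ p.1) (π₁ p.1) (P₂ p.2) (π₂ p.2)
    calc ∑ σ : Fin d → Equiv.Perm (Fin (m₁ p.1 + m₂ p.2)),
          (a p.1 * b p.2 *
            (if intDomain σ (fun _ => (0:ℝ)) (fun _ => 1)
              ⊆ shuffleSet (m₁ p.1) (m₂ p.2) (π₁ p.1) (π₂ p.2) then (1:ℝ) else 0))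
          * msMonomial x (Fin.append (P₁ p.1) (P₂ p.2)) σ
        = (a p.1 * b p.2) * ∑ σ : Fin d → Equiv.Perm (Fin (m₁ p.1 + m₂ p.2)),
            (if intDomain σ (fun _ => (0:ℝ)) (fun _ => 1)
              ⊆ shuffleSet (m₁ p.1) (m₂ p.2) (π₁ p.1) (π₂ p.2) then (1:ℝ) else 0)
            * msMonomial x (Fin.append (P₁ p.1) (P₂ p.2)) σ := by
          rw [Finset.mul_sum]
          exact Finset.sum_congr rfl fun σ _ => by ring
      _ = (a p.1 * b p.2) * (msMonomial x (P₁ p.1) (π₁ p.1) * msMonomial x (P₂ p.2) (π₂ p.2)) := by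
          rw [← hkey]
      _ = (a p.1 * msMonomial x (P₁ p.1) (π₁ p.1)) * (b p.2 * msMonomial x (P₂ p.2) (π₂ p.2)) := by
          ring
  have hsum2 : ∑ p : Fin r₁ × Fin r₂,
      (a p.1 * msMonomial x (P₁ p.1) (π₁ p.1)) * (b p.2 * msMonomial x (P₂ p.2) (π₂ p.2))
      = (∑ i, a i * msMonomial x (P₁ i) (π₁ i)) * (∑ j, b j * msMonomial x (P₂ j) (π₂ j)) := by
    rw [Finset.sum_mul_sum, Fintype.sum_prod_type]
  rw [Finset.sum_congr rfl fun p _ => hshuf p, hsum2]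
  have h1 : ∑ i, (b₀ * a i) * msMonomial x (P₁ i) (π₁ i)
      = b₀ * ∑ i, a i * msMonomial x (P₁ i) (π₁ i) := by
    rw [Finset.mul_sum]
    exact Finset.sum_congr rfl fun i _ => by ring
  have h2 : ∑ j, (a₀ * b j) * msMonomial x (P₂ j) (π₂ j)
      = a₀ * ∑ j, b j * msMonomial x (P₂ j) (π₂ j) := by
    rw [Finset.mul_sum]
    exact Finset.sum_congr rfl fun j _ => by ring
  rw [h1, h2]
  ring

end
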